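/- arXiv:2012.06797 — 2 statements merged into one kernel-verified Lean document; each statement's English description precedes it below -/
import Mathlib

section
/- Discrete Green-type bound (unstable part): Under the discrete dichotomy assumption with adapted norm bound |𝒜(n,m)P²_m x|_n ≤ D(μ_m/μ_n)^{-λ}ν_m^d|x| for n ≤ m, if |g_m| ≤ δ(μ_{m+1}^λ − μ_m^λ)/(μ_{m+1}^λ ν_m^d) for all m, then for every n, |∑_{m=n}^{∞} 𝒜(n,m)P²_m g_m|_n ≤ Dδ. -/
open Filter

/-- Discrete Green-type bound for the unstable part, in the adapted norm
`|x|_n = ⨆_{k ≤ n} ‖𝒜(k,n)x‖ (μ_n/μ_k)^λ`. -/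
theorem discrete_green_bound_unstable
    {X : Type*} [NormedAddCommGroup X] [NormedSpace ℝ X] [CompleteSpace X]
    (𝒜 : ℕ → ℕ → X →L[ℝ] X) (P2 : ℕ → X →L[ℝ] X)
    (μ ν : ℕ → ℝ) (g : ℕ → X) (D lam d δ : ℝ)
    (hD : 0 < D) (hlam : 0 < lam) (hd : 0 ≤ d) (hδ : 0 < δ)
    (hμmono : StrictMono μ) (hμ0 : 1 ≤ μ 0) (hμtop : Tendsto μ atTop atTop)
    (hν : ∀ n, 1 ≤ ν n)
    (hcoc : ∀ k n m, k ≤ n → n ≤ m → (𝒜 k n).comp (𝒜 n m) = 𝒜 k m)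
    (hAdapt : ∀ n m, n ≤ m → ∀ x : X,
      (⨆ k : Set.Iic n, ‖𝒜 (↑k) n (𝒜 n m (P2 m x))‖ * (μ n / μ (↑k)) ^ lam)
        ≤ D * (μ m / μ n) ^ (-lam) * (ν m) ^ d * ‖x‖)
    (hg : ∀ m, ‖g m‖ ≤ δ * (((μ (m + 1)) ^ lam - (μ m) ^ lam) /
      ((μ (m + 1)) ^ lam * (ν m) ^ d))) :
    ∀ n : ℕ,
      (⨆ k : Set.Iic n,
          ‖𝒜 (↑k) n (∑' m : ℕ, 𝒜 n (n + m) (P2 (n + m) (g (n + m))))‖ *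
            (μ n / μ (↑k)) ^ lam)
        ≤ D * δ := by
  intro n
  have hμ1 : ∀ m, 1 ≤ μ m := fun m => le_trans hμ0 (hμmono.monotone (Nat.zero_le m))
  have hμpos : ∀ m, 0 < μ m := fun m => lt_of_lt_of_le one_pos (hμ1 m)
  have hνpos : ∀ m, 0 < ν m := fun m => lt_of_lt_of_le one_pos (hν m)
  have hapos : ∀ m, 0 < (μ m) ^ lam := fun m => Real.rpow_pos_of_pos (hμpos m) lam
  have hVpos : ∀ m, 0 < (ν m) ^ d := fun m => Real.rpow_pos_of_pos (hνpos m) d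
  haveI : Nonempty (Set.Iic n) := ⟨⟨0, Set.mem_Iic.mpr (Nat.zero_le n)⟩⟩
  haveI := (Set.finite_Iic n).to_subtype
  set f : ℕ → X := fun m => 𝒜 n (n + m) (P2 (n + m) (g (n + m))) with hf
  set b : ℕ → ℝ := fun m =>
    D * δ * (μ n) ^ lam * (((μ (n + m)) ^ lam)⁻¹ - ((μ (n + m + 1)) ^ lam)⁻¹) with hb
  -- monotonicity of a
  have hble' : ∀ m m', m ≤ m' → ((μ m') ^ lam)⁻¹ ≤ ((μ m) ^ lam)⁻¹ := by
    intro m m' h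
    exact inv_anti₀ (hapos m)
      (Real.rpow_le_rpow (hμpos m).le (hμmono.monotone h) hlam.le)
  have hbnonneg : ∀ m, 0 ≤ b m := by
    intro m
    have h1 : ((μ (n + m + 1)) ^ lam)⁻¹ ≤ ((μ (n + m)) ^ lam)⁻¹ :=
      hble' _ _ (Nat.le_succ _)
    have : 0 ≤ D * δ * (μ n) ^ lam := mul_nonneg (mul_nonneg hD.le hδ.le) (hapos n).le
    exact mul_nonneg this (by linarith)
  -- the key pointwise bound
  have key : ∀ (k : Set.Iic n) (m : ℕ),
      ‖𝒜 (↑k) n (f m)‖ * (μ n / μ (↑k)) ^ lam ≤ b m := by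
    intro k m
    have hle : ‖𝒜 (↑k) n (f m)‖ * (μ n / μ (↑k)) ^ lam ≤
        ⨆ k' : Set.Iic n,
          ‖𝒜 (↑k') n (𝒜 n (n + m) (P2 (n + m) (g (n + m))))‖ * (μ n / μ (↑k')) ^ lam := by
      exact le_ciSup (f := fun k' : Set.Iic n =>
        ‖𝒜 (↑k') n (𝒜 n (n + m) (P2 (n + m) (g (n + m))))‖ * (μ n / μ (↑k')) ^ lam)
        (Set.Finite.bddAbove (Set.finite_range _)) k
    have h2 := hAdapt n (n + m) (Nat.le_add_right n m) (g (n + m))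
    have hcg := hg (n + m)
    set a : ℝ := (μ (n + m)) ^ lam with ha
    set a' : ℝ := (μ (n + m + 1)) ^ lam with ha'
    set V : ℝ := (ν (n + m)) ^ d with hV
    have hr : (μ (n + m) / μ n) ^ (-lam) = (μ n) ^ lam / a := by
      rw [Real.rpow_neg (div_pos (hμpos _) (hμpos n)).le,
        Real.div_rpow (hμpos _).le (hμpos n).le, ha, inv_div]
    have hmul : 0 ≤ D * ((μ n) ^ lam / a) * V :=
      mul_nonneg (mul_nonneg hD.le (div_pos (hapos n) (hapos (n + m))).le) (hVpos _).le
    have h3 : D * ((μ n) ^ lam / a) * V * ‖g (n + m)‖ ≤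
        D * ((μ n) ^ lam / a) * V * (δ * ((a' - a) / (a' * V))) :=
      mul_le_mul_of_nonneg_left hcg hmul
    have heq : D * ((μ n) ^ lam / a) * V * (δ * ((a' - a) / (a' * V))) = b m := by
      have hane : a ≠ 0 := (hapos (n + m)).ne'
      have ha'ne : a' ≠ 0 := (hapos (n + m + 1)).ne'
      have hVne : V ≠ 0 := (hVpos (n + m)).ne'
      simp only [hb]
      rw [← ha, ← ha']
      field_simp
    calc ‖𝒜 (↑k) n (f m)‖ * (μ n / μ (↑k)) ^ lam
        ≤ D * (μ (n + m) / μ n) ^ (-lam) * (ν (n + m)) ^ d * ‖g (n + m)‖ :=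
          le_trans hle h2
      _ = D * ((μ n) ^ lam / a) * V * ‖g (n + m)‖ := by rw [hr]
      _ ≤ D * ((μ n) ^ lam / a) * V * (δ * ((a' - a) / (a' * V))) := h3
      _ = b m := heq
  -- c_k ≥ 1
  have hc1 : ∀ k : Set.Iic n, (1 : ℝ) ≤ (μ n / μ (↑k)) ^ lam := by
    intro k
    apply Real.one_le_rpow _ hlam.le
    rw [le_div_iff₀ (hμpos _)]
    simpa using hμmono.monotone k.2
  have keynorm : ∀ (k : Set.Iic n) (m : ℕ), ‖𝒜 (↑k) n (f m)‖ ≤ b m := by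
    intro k m
    refine le_trans ?_ (key k m)
    exact le_mul_of_one_le_right (norm_nonneg _) (hc1 k)
  -- partial sums of b
  have hsum_range : ∀ N, ∑ m ∈ Finset.range N, b m ≤ D * δ := by
    intro N
    have htel : ∑ m ∈ Finset.range N,
        (((μ (n + m)) ^ lam)⁻¹ - ((μ (n + m + 1)) ^ lam)⁻¹)
        = ((μ (n + 0)) ^ lam)⁻¹ - ((μ (n + N)) ^ lam)⁻¹ := by
      exact Finset.sum_range_sub' (fun m => ((μ (n + m)) ^ lam)⁻¹) N
    have : ∑ m ∈ Finset.range N, b m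
        = D * δ * (μ n) ^ lam * (((μ n) ^ lam)⁻¹ - ((μ (n + N)) ^ lam)⁻¹) := by
      simp only [hb]
      rw [← Finset.mul_sum, htel]
      norm_num
    rw [this]
    have h1 : D * δ * (μ n) ^ lam * (((μ n) ^ lam)⁻¹ - ((μ (n + N)) ^ lam)⁻¹)
        ≤ D * δ * (μ n) ^ lam * ((μ n) ^ lam)⁻¹ := by
      apply mul_le_mul_of_nonneg_left _
        (mul_nonneg (mul_nonneg hD.le hδ.le) (hapos n).le)
      have : 0 ≤ ((μ (n + N)) ^ lam)⁻¹ := (inv_pos.mpr (hapos (n + N))).le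
      linarith
    have h2 : D * δ * (μ n) ^ lam * ((μ n) ^ lam)⁻¹ = D * δ :=
      mul_inv_cancel_right₀ (hapos n).ne' _
    linarith
  have hbsummable : Summable b :=
    summable_of_sum_range_le hbnonneg hsum_range
  have hbtsum : ∑' m, b m ≤ D * δ :=
    Summable.tsum_le_of_sum_range_le hbsummable hsum_range
  -- summability of f
  have hfnorm : ∀ m, ‖f m‖ ≤ b m := by
    intro m
    have heq : 𝒜 n n (f m) = f m := by
      have := hcoc n n (n + m) le_rfl (Nat.le_add_right n m)
      calc 𝒜 n n (f m) = ((𝒜 n n).comp (𝒜 n (n + m))) (P2 (n + m) (g (n + m))) := rfl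
        _ = f m := by rw [this]
    have := keynorm ⟨n, Set.mem_Iic.mpr le_rfl⟩ m
    simpa [heq] using this
  have hfsummable : Summable f := Summable.of_norm_bounded hbsummable hfnorm
  -- conclude
  apply ciSup_le
  intro k
  have hmap : 𝒜 (↑k) n (∑' m, f m) = ∑' m, 𝒜 (↑k) n (f m) :=
    ContinuousLinearMap.map_tsum _ hfsummable
  have hnsum : Summable (fun m => ‖𝒜 (↑k) n (f m)‖) :=
    Summable.of_nonneg_of_le (fun m => norm_nonneg _) (keynorm k) hbsummable
  rw [hmap]
  calc ‖(∑' m, 𝒜 (↑k) n (f m))‖ * (μ n / μ (↑k)) ^ lam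
      ≤ (∑' m, ‖𝒜 (↑k) n (f m)‖) * (μ n / μ (↑k)) ^ lam :=
        mul_le_mul_of_nonneg_right (norm_tsum_le_tsum_norm hnsum)
          (Real.rpow_nonneg (div_pos (hμpos n) (hμpos _)).le lam)
    _ = ∑' m, ‖𝒜 (↑k) n (f m)‖ * (μ n / μ (↑k)) ^ lam := by
        rw [tsum_mul_right]
    _ ≤ ∑' m, b m := by
        apply Summable.tsum_le_tsum (key k) _ hbsummable
        exact hnsum.mul_right _
    _ ≤ D * δ := hbtsum
end

section
/- Continuous-time shadowing corollary: Let x' = A(t)x admit a (μ,ν)-dichotomy on [0,∞) with projections P¹(t)+P²(t)=I (no center direction), constants D, λ > 0, d ≥ 0, where μ is strictly increasing differentiable with μ(0)=1, μ(t)→∞, ν(t) ≥ 1. Suppose f: [0,∞)×X → X is continuous with |f(t,x) − f(t,y)| ≤ (cμ'(t)/(μ(t)ν(t)^d))|x − y| and q := c(2D+1) + 2cD/λ < 1. Then there is C > 0 such that for each δ > 0 and each differentiable y: [0,∞)→X with |y'(t) − A(t)y(t) − f(t,y(t))| ≤ δμ'(t)/(μ(t)ν(t)^d) for all t ≥ 0,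 there exists a solution x of x' = A(t)x + f(t,x) with sup_{t≥0} |x(t) − y(t)| ≤ Cδ. -/
open Filter Set Topology MeasureTheory

/-- small helper: `(t - t₀) • ε t` is little-o of `t - t₀` when `ε → 0`. -/
lemma aux_isLittleO_smul {X : Type*} [NormedAddCommGroup X] [NormedSpace ℝ X]
    {l : Filter ℝ} {t₀ : ℝ} {ε : ℝ → X} (hε : Tendsto ε l (𝓝 0)) :
    (fun t => (t - t₀) • ε t) =o[l] fun t => t - t₀ := by
  rw [Asymptotics.isLittleO_iff]
  intro c hc
  filter_upwards [Metric.tendsto_nhds.1 hε c hc] with t ht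
  rw [norm_smul]
  have : ‖ε t‖ ≤ c := by
    have := ht
    rw [dist_zero_right] at this
    exact this.le
  calc ‖t - t₀‖ * ‖ε t‖ ≤ ‖t - t₀‖ * c := by
        exact mul_le_mul_of_nonneg_left this (norm_nonneg _)
    _ = c * ‖t - t₀‖ := by ring

/-- helper: composition with a linearly bounded operator preserves little-o. -/
lemma aux_isLittleO_of_bound {X : Type*} [NormedAddCommGroup X] [NormedSpace ℝ X]
    {l : Filter ℝ} {Ψ G : ℝ → X} {g : ℝ → ℝ} {C : ℝ}
    (hb : ∀ᶠ s in l, ‖Ψ s‖ ≤ C * ‖G s‖) (h : G =o[l] g) : Ψ =o[l] g :=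
  (Asymptotics.IsBigO.of_bound C hb).trans_isLittleO h

set_option maxHeartbeats 2000000 in
/-- Continuous-time shadowing corollary: if `x' = A(t)x` admits a
`(μ,ν)`-dichotomy without center direction and `f` has a sufficiently small
Lipschitz constant, then every pseudosolution is shadowed by a true solution of
`x' = A(t)x + f(t,x)`. -/
theorem continuous_shadowing_no_center
    {X : Type*} [NormedAddCommGroup X] [NormedSpace ℝ X] [CompleteSpace X]
    (A : ℝ → X →L[ℝ] X) (T : ℝ → ℝ → X →L[ℝ] X)
    (P1 P2 : ℝ → X →L[ℝ] X)
    (μ μ' ν : ℝ → ℝ) (D lam d c : ℝ) (f : ℝ → X → X)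
    (hD : 0 < D) (hlam : 0 < lam) (hd : 0 ≤ d) (hc : 0 ≤ c)
    (hAc : ContinuousOn A (Set.Ici (0:ℝ)))
    (hμmono : StrictMonoOn μ (Set.Ici (0:ℝ)))
    (hμderiv : ∀ t, 0 ≤ t → HasDerivAt μ (μ' t) t)
    (hμ0 : μ 0 = 1) (hμtop : Tendsto μ atTop atTop)
    (hν : ∀ t, 0 ≤ t → 1 ≤ ν t)
    (hTid : ∀ t, 0 ≤ t → T t t = 1)
    (hTcoc : ∀ t s r, 0 ≤ r → 0 ≤ s → 0 ≤ t → (T t s).comp (T s r) = T t r)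
    (hTode : ∀ s, 0 ≤ s → ∀ v : X, ∀ t, 0 ≤ t →
      HasDerivAt (fun r => T r s v) (A t (T t s v)) t)
    (hsum : ∀ t, 0 ≤ t → P1 t + P2 t = 1)
    (hproj : ∀ t, 0 ≤ t → (P1 t).comp (P1 t) = P1 t ∧ (P2 t).comp (P2 t) = P2 t)
    (hmut : ∀ t, 0 ≤ t → (P1 t).comp (P2 t) = 0 ∧ (P2 t).comp (P1 t) = 0)
    (hinv : ∀ t s, 0 ≤ s → 0 ≤ t →
      (T t s).comp (P1 s) = (P1 t).comp (T t s) ∧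
      (T t s).comp (P2 s) = (P2 t).comp (T t s))
    (hbS : ∀ t s, 0 ≤ s → s ≤ t →
      ‖(T t s).comp (P1 s)‖ ≤ D * (μ t / μ s) ^ (-lam) * (ν s) ^ d)
    (hbU : ∀ t s, 0 ≤ t → t ≤ s →
      ‖(T t s).comp (P2 s)‖ ≤ D * (μ s / μ t) ^ (-lam) * (ν s) ^ d)
    (hfc : ContinuousOn (fun p : ℝ × X => f p.1 p.2) (Set.Ici (0:ℝ) ×ˢ Set.univ))
    (hfLip : ∀ t, 0 ≤ t → ∀ x y : X,
      ‖f t x - f t y‖ ≤ c * μ' t / (μ t * (ν t) ^ d) * ‖x - y‖)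
    (hq : c * (2 * D + 1) + 2 * c * D / lam < 1) :
    ∃ C > 0, ∀ δ > 0, ∀ y yd : ℝ → X,
      (∀ t, 0 ≤ t → HasDerivAt y (yd t) t) →
      (∀ t, 0 ≤ t → ‖yd t - A t (y t) - f t (y t)‖ ≤ δ * μ' t / (μ t * (ν t) ^ d)) →
      ∃ x : ℝ → X,
        (∀ t, 0 ≤ t → HasDerivAt x (A t (x t) + f t (x t)) t) ∧
        (∀ t, 0 ≤ t → ‖x t - y t‖ ≤ C * δ) := by
  -- ### basic facts about μ, ν
  have hμcont : ContinuousOn μ (Ici 0) :=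
    fun t ht => (hμderiv t ht).continuousAt.continuousWithinAt
  have hμ1 : ∀ s, 0 ≤ s → 1 ≤ μ s := by
    intro s hs
    rcases eq_or_lt_of_le hs with h | h
    · rw [← h, hμ0]
    · rw [← hμ0]
      exact (hμmono self_mem_Ici hs h).le
  have hμpos : ∀ s, 0 ≤ s → 0 < μ s := fun s hs => lt_of_lt_of_le one_pos (hμ1 s hs)
  have hμ'nonneg : ∀ s, 0 ≤ s → 0 ≤ μ' s := by
    intro s hs
    have hderiv : HasDerivWithinAt μ (μ' s) (Ioi s) s := (hμderiv s hs).hasDerivWithinAt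
    rw [hasDerivWithinAt_iff_tendsto_slope] at hderiv
    have hne : s ∉ Ioi s := by simp
    rw [diff_singleton_eq_self hne] at hderiv
    refine ge_of_tendsto hderiv ?_
    filter_upwards [self_mem_nhdsWithin] with u hu
    have hus : s < u := hu
    have : μ s ≤ μ u := (hμmono hs (le_trans hs hus.le) hus).le
    rw [slope_def_field]
    exact div_nonneg (by linarith) (by linarith)
  have hνd1 : ∀ s, 0 ≤ s → 1 ≤ ν s ^ d := fun s hs => Real.one_le_rpow (hν s hs) hd
  have hνdpos : ∀ s, 0 ≤ s → 0 < ν s ^ d := fun s hs => lt_of_lt_of_le one_pos (hνd1 s hs)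
  have hφnonneg : ∀ s, 0 ≤ s → 0 ≤ μ' s / (μ s * ν s ^ d) := by
    intro s hs
    exact div_nonneg (hμ'nonneg s hs) (le_of_lt (mul_pos (hμpos s hs) (hνdpos s hs)))
  have hφle : ∀ s, 0 ≤ s → μ' s / (μ s * ν s ^ d) ≤ μ' s := by
    intro s hs
    have h1 : (1:ℝ) ≤ μ s * ν s ^ d := by
      calc (1:ℝ) = 1 * 1 := by ring
        _ ≤ μ s * ν s ^ d := mul_le_mul (hμ1 s hs) (hνd1 s hs) one_pos.le
            (le_trans one_pos.le (hμ1 s hs))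
    exact div_le_self (hμ'nonneg s hs) h1
  -- ### basic facts about the evolution family
  have hTapp : ∀ t s r, 0 ≤ r → 0 ≤ s → 0 ≤ t → ∀ v : X, T t s (T s r v) = T t r v := by
    intro t s r hr hs ht v
    have := hTcoc t s r hr hs ht
    calc T t s (T s r v) = ((T t s).comp (T s r)) v := rfl
      _ = T t r v := by rw [this]
  have hTinv : ∀ t s, 0 ≤ t → 0 ≤ s → ∀ v : X, T t s (T s t v) = v := by
    intro t s ht hs v
    rw [hTapp t s t ht hs ht v, hTid t ht]
    rfl
  -- ### local exponential bound (Grönwall)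
  have gron : ∀ R : ℝ, 0 ≤ R → ∃ C : ℝ, 1 ≤ C ∧
      ∀ a ∈ Icc (0:ℝ) R, ∀ b ∈ Icc (0:ℝ) R, ∀ v : X, ‖T a b v‖ ≤ C * ‖v‖ := by
    intro R hR
    obtain ⟨M₀, hM₀⟩ := (isCompact_Icc (a := (0:ℝ)) (b := R)).exists_bound_of_continuousOn
      (hAc.mono (fun x hx => hx.1))
    set M := max M₀ 0 with hM
    have hMnn : 0 ≤ M := le_max_right _ _
    have hMb : ∀ x ∈ Icc (0:ℝ) R, ‖A x‖ ≤ M := fun x hx => (hM₀ x hx).trans (le_max_left _ _)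
    refine ⟨Real.exp (M * R), Real.one_le_exp (mul_nonneg hMnn hR), ?_⟩
    intro a ha b hb v
    have key : ∀ p q : ℝ, p ∈ Icc (0:ℝ) R → q ∈ Icc (0:ℝ) R → q ≤ p →
        ‖T p q v‖ ≤ Real.exp (M * R) * ‖v‖ ∧ ‖T q p v‖ ≤ Real.exp (M * R) * ‖v‖ := by
      intro p q hp hq hqp
      have hcont : ContinuousOn (fun u => T u q v) (Icc q p) := by
        intro u hu
        exact (hTode q hq.1 v u (hq.1.trans hu.1)).continuousAt.continuousWithinAt
      constructor
      · -- forward bound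
        have hfwd := norm_le_gronwallBound_of_norm_deriv_right_le (f := fun u => T u q v)
          (f' := fun u => A u (T u q v)) (δ := ‖v‖) (K := M) (ε := 0) (a := q) (b := p)
          hcont
          (fun x hx => (hTode q hq.1 v x (hq.1.trans hx.1)).hasDerivWithinAt)
          (by simp [hTid q hq.1])
          (fun x hx => by
            have hb1 : ‖A x (T x q v)‖ ≤ ‖A x‖ * ‖T x q v‖ := (A x).le_opNorm _
            have hb2 : ‖A x‖ ≤ M := hMb x ⟨hq.1.trans hx.1, hx.2.le.trans hp.2⟩
            calc ‖A x (T x q v)‖ ≤ M * ‖T x q v‖ :=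
                  hb1.trans (mul_le_mul_of_nonneg_right hb2 (norm_nonneg _))
              _ = M * ‖T x q v‖ + 0 := by ring)
        have h2 : ‖T p q v‖ ≤ ‖v‖ * Real.exp (M * (p - q)) := by
          have := hfwd p ⟨hqp, le_refl p⟩
          rw [gronwallBound_ε0] at this
          simpa using this
        refine h2.trans ?_
        rw [mul_comm]
        apply mul_le_mul_of_nonneg_right _ (norm_nonneg v)
        exact Real.exp_le_exp.2 (mul_le_mul_of_nonneg_left (by linarith [hq.1, hp.2]) hMnn)
      · -- backward bound : consider u ↦ T (q + p - u) p v on [q, p]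
        have hin : ∀ u ∈ Icc q p, q + p - u ∈ Icc q p := by
          intro u hu
          constructor <;> [linarith [hu.2]; linarith [hu.1]]
        have hcont2 : ContinuousOn (fun u => T (q + p - u) p v) (Icc q p) := by
          have houter : ContinuousOn (fun r => T r p v) (Icc q p) := by
            intro r hr
            exact (hTode p hp.1 v r (hq.1.trans hr.1)).continuousAt.continuousWithinAt
          exact houter.comp (by fun_prop) hin
        have hbwd := norm_le_gronwallBound_of_norm_deriv_right_le
          (f := fun u => T (q + p - u) p v)
          (f' := fun u => (-1 : ℝ) • A (q + p - u) (T (q + p - u) p v))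
          (δ := ‖v‖) (K := M) (ε := 0) (a := q) (b := p)
          hcont2
          (fun x hx => by
            have hxin : q + p - x ∈ Icc q p := hin x ⟨hx.1, hx.2.le⟩
            have hout := hTode p hp.1 v (q + p - x) (hq.1.trans hxin.1)
            have hinn : HasDerivAt (fun u : ℝ => q + p - u) (-1) x := by
              simpa using (hasDerivAt_id x).const_sub (q + p)
            exact (hout.scomp x hinn).hasDerivWithinAt)
          (by
            have heq : q + p - q = p := by ring
            simp only [heq]
            simp [hTid p hp.1])
          (fun x hx => by
            have hxin : q + p - x ∈ Icc q p := hin x ⟨hx.1, hx.2.le⟩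
            have hb1 : ‖A (q + p - x) (T (q + p - x) p v)‖ ≤ M * ‖T (q + p - x) p v‖ := by
              refine ((A _).le_opNorm _).trans
                (mul_le_mul_of_nonneg_right ?_ (norm_nonneg _))
              exact hMb _ ⟨hq.1.trans hxin.1, hxin.2.trans hp.2⟩
            rw [norm_smul]
            simpa using hb1.trans (le_of_eq (by ring)))
        have h2 : ‖T q p v‖ ≤ ‖v‖ * Real.exp (M * (p - q)) := by
          have := hbwd p ⟨hqp, le_refl p⟩
          rw [gronwallBound_ε0] at this
          have heq : q + p - p = q := by ring
          simpa [heq] using this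
        refine h2.trans ?_
        rw [mul_comm]
        apply mul_le_mul_of_nonneg_right _ (norm_nonneg v)
        exact Real.exp_le_exp.2 (mul_le_mul_of_nonneg_left (by linarith [hq.1, hp.2]) hMnn)
    rcases le_total b a with h | h
    · exact (key a b ha hb h).1
    · exact (key b a hb ha h).2
  -- ### strong continuity in the second variable (with a moving vector)
  have hTcont2 : ∀ r, 0 ≤ r → ∀ u : ℝ → X, ContinuousOn u (Ici 0) →
      ContinuousOn (fun s => T r s (u s)) (Ici 0) := by
    intro r hr u hu s₀ hs₀
    obtain ⟨C, hC1, hC⟩ := gron (max r (s₀ + 1)) (le_max_of_le_right (by linarith [hs₀.out]))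
    have hkey : Tendsto (fun s => T s₀ s (u s)) (𝓝[Ici 0] s₀) (𝓝 (u s₀)) := by
      rw [tendsto_iff_norm_sub_tendsto_zero]
      have hw : Tendsto (fun s => C * ‖u s - u s₀‖ + C * ‖u s₀ - T s s₀ (u s₀)‖)
          (𝓝[Ici 0] s₀) (𝓝 0) := by
        have h1 : Tendsto (fun s => ‖u s - u s₀‖) (𝓝[Ici 0] s₀) (𝓝 0) :=
          tendsto_iff_norm_sub_tendsto_zero.1 (hu s₀ hs₀)
        have h2 : Tendsto (fun s => ‖u s₀ - T s s₀ (u s₀)‖) (𝓝[Ici 0] s₀) (𝓝 0) := by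
          have hTc : Tendsto (fun s => T s s₀ (u s₀)) (𝓝[Ici 0] s₀) (𝓝 (u s₀)) := by
            have := (hTode s₀ hs₀ (u s₀) s₀ hs₀).continuousAt.continuousWithinAt (s := Ici 0)
            rw [ContinuousWithinAt, hTid s₀ hs₀] at this
            simpa using this
          have := tendsto_iff_norm_sub_tendsto_zero.1 hTc
          simpa [norm_sub_rev] using this
        have := (h1.const_mul C).add (h2.const_mul C)
        simpa using this
      apply squeeze_zero_norm' _ hw
      have hmem : (Ici 0 ∩ Iic (s₀ + 1)) ∈ 𝓝[Ici 0] s₀ := by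
        apply inter_mem self_mem_nhdsWithin
        exact nhdsWithin_le_nhds (Iic_mem_nhds (by linarith))
      filter_upwards [hmem] with s hs
      have hs0 : (0:ℝ) ≤ s := hs.1
      have hsR : s ∈ Icc 0 (max r (s₀ + 1)) := ⟨hs0, le_max_of_le_right hs.2⟩
      have hs₀R : s₀ ∈ Icc 0 (max r (s₀ + 1)) := ⟨hs₀, le_max_of_le_right (by linarith)⟩
      have hrw : T s₀ s (u s) - u s₀ = T s₀ s (u s - T s s₀ (u s₀)) := by
        rw [map_sub, hTinv s₀ s hs₀ hs0]
      rw [norm_norm, hrw]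
      calc ‖T s₀ s (u s - T s s₀ (u s₀))‖ ≤ C * ‖u s - T s s₀ (u s₀)‖ :=
            hC s₀ hs₀R s hsR _
        _ ≤ C * (‖u s - u s₀‖ + ‖u s₀ - T s s₀ (u s₀)‖) := by
            apply mul_le_mul_of_nonneg_left _ (by linarith)
            have := norm_sub_le_norm_sub_add_norm_sub (u s) (u s₀) (T s s₀ (u s₀))
            exact this
        _ = C * ‖u s - u s₀‖ + C * ‖u s₀ - T s s₀ (u s₀)‖ := by ring
    have hfin : Tendsto (fun s => T r s₀ (T s₀ s (u s))) (𝓝[Ici 0] s₀)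
        (𝓝 (T r s₀ (u s₀))) := ((T r s₀).continuous.continuousAt.tendsto).comp hkey
    have : ContinuousWithinAt (fun s => T r s₀ (T s₀ s (u s))) (Ici 0) s₀ := by
      rw [ContinuousWithinAt]
      simpa [hTid s₀ hs₀] using hfin
    apply this.congr
    · intro s hs
      rw [hTapp r s₀ s hs.out hs₀ hr]
    · rw [hTapp r s₀ s₀ hs₀ hs₀ hr]
  -- ### strong continuity in the first variable (with a moving vector)
  have hTcont1 : ∀ ρ : ℝ → X, ContinuousOn ρ (Ici 0) →
      ContinuousOn (fun t => T t 0 (ρ t)) (Ici 0) := by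
    intro ρ hρ t₀ ht₀
    obtain ⟨C, hC1, hC⟩ := gron (t₀ + 1) (by linarith [ht₀.out])
    rw [ContinuousWithinAt, tendsto_iff_norm_sub_tendsto_zero]
    have hw : Tendsto (fun t => C * ‖ρ t - ρ t₀‖ + ‖T t 0 (ρ t₀) - T t₀ 0 (ρ t₀)‖)
        (𝓝[Ici 0] t₀) (𝓝 0) := by
      have h1 : Tendsto (fun t => ‖ρ t - ρ t₀‖) (𝓝[Ici 0] t₀) (𝓝 0) :=
        tendsto_iff_norm_sub_tendsto_zero.1 (hρ t₀ ht₀)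
      have h2 : Tendsto (fun t => ‖T t 0 (ρ t₀) - T t₀ 0 (ρ t₀)‖) (𝓝[Ici 0] t₀) (𝓝 0) := by
        have hTc : Tendsto (fun t => T t 0 (ρ t₀)) (𝓝[Ici 0] t₀) (𝓝 (T t₀ 0 (ρ t₀))) :=
          ((hTode 0 le_rfl (ρ t₀) t₀ ht₀).continuousAt.continuousWithinAt (s := Ici 0))
        exact tendsto_iff_norm_sub_tendsto_zero.1 hTc
      have := (h1.const_mul C).add h2
      simpa using this
    apply squeeze_zero_norm' _ hw
    have hmem : (Ici 0 ∩ Iic (t₀ + 1)) ∈ 𝓝[Ici 0] t₀ := by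
      apply inter_mem self_mem_nhdsWithin
      exact nhdsWithin_le_nhds (Iic_mem_nhds (by linarith))
    filter_upwards [hmem] with t ht
    have htR : t ∈ Icc 0 (t₀ + 1) := ⟨ht.1, ht.2⟩
    have hrw : T t 0 (ρ t) - T t₀ 0 (ρ t₀) =
        T t 0 (ρ t - ρ t₀) + (T t 0 (ρ t₀) - T t₀ 0 (ρ t₀)) := by
      rw [map_sub]; abel
    rw [norm_norm, hrw]
    calc ‖T t 0 (ρ t - ρ t₀) + (T t 0 (ρ t₀) - T t₀ 0 (ρ t₀))‖
        ≤ ‖T t 0 (ρ t - ρ t₀)‖ + ‖T t 0 (ρ t₀) - T t₀ 0 (ρ t₀)‖ := norm_add_le _ _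
      _ ≤ C * ‖ρ t - ρ t₀‖ + ‖T t 0 (ρ t₀) - T t₀ 0 (ρ t₀)‖ := by
          have := hC t htR 0 ⟨le_refl 0, by linarith [ht₀.out]⟩ (ρ t - ρ t₀)
          linarith
  -- ### derivative in the second variable (constant vector)
  have hTderiv2 : ∀ r, 0 ≤ r → ∀ s₀, 0 < s₀ → ∀ v : X,
      HasDerivAt (fun s => T r s v) (-(T r s₀ (A s₀ v))) s₀ := by
    intro r hr s₀ hs₀ v
    obtain ⟨C, hC1, hC⟩ := gron (max r (s₀ + 1)) (le_max_of_le_right (by linarith))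
    have hη := hTode s₀ hs₀.le v s₀ hs₀.le
    rw [hasDerivAt_iff_isLittleO] at hη ⊢
    simp only [hTid s₀ hs₀.le, ContinuousLinearMap.one_apply] at hη
    set G : ℝ → X := fun s => v - T s s₀ v + (s - s₀) • (A s₀ v) with hGdef
    have hG : G =o[𝓝 s₀] fun s => s - s₀ := by
      have h2 := hη.neg_left
      apply h2.congr' ?_ (EventuallyEq.refl _ _)
      filter_upwards with s
      show -(T s s₀ v - v - (s - s₀) • A s₀ v) = G s
      rw [hGdef]
      abel
    have hbound : ∀ᶠ s in 𝓝 s₀, 0 < s ∧ s ≤ s₀ + 1 := by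
      filter_upwards [Ioo_mem_nhds hs₀ (lt_add_one s₀)] with s hs
      exact ⟨hs.1, hs.2.le⟩
    have hε : Tendsto (fun s => T r s (A s₀ v) - T r s₀ (A s₀ v)) (𝓝 s₀) (𝓝 0) := by
      have hcA : ContinuousAt (fun s => T r s (A s₀ v)) s₀ :=
        (hTcont2 r hr (fun _ => A s₀ v) continuousOn_const).continuousAt
          (Ici_mem_nhds hs₀)
      have := hcA.tendsto.sub (tendsto_const_nhds (x := T r s₀ (A s₀ v)))
      simpa using this
    have h1 : (fun s => T r s (G s)) =o[𝓝 s₀] fun s => s - s₀ := by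
      refine aux_isLittleO_of_bound (C := C) ?_ hG
      filter_upwards [hbound] with s hs
      exact hC r ⟨hr, le_max_left _ _⟩ s ⟨hs.1.le, le_max_of_le_right hs.2⟩ _
    have h2 : (fun s => (s - s₀) • (T r s (A s₀ v) - T r s₀ (A s₀ v)))
        =o[𝓝 s₀] fun s => s - s₀ := aux_isLittleO_smul hε
    refine (h1.sub h2).congr' ?_ (EventuallyEq.refl _ _)
    filter_upwards [hbound] with s hs
    have e1 : T r s (T s s₀ v) = T r s₀ v := hTapp r s s₀ hs₀.le hs.1.le hr v
    have hsplit : T r s (G s) = T r s v - T r s₀ v + (s - s₀) • T r s (A s₀ v) := by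
      rw [hGdef]
      show T r s (v - T s s₀ v + (s - s₀) • A s₀ v) = _
      rw [map_add, map_sub, _root_.map_smul, e1]
    rw [hsplit, smul_sub, smul_neg]
    abel
  -- ### derivative of t ↦ T t 0 (ρ t)
  have hTderiv1 : ∀ (s : Set ℝ) (t₀ : ℝ), 0 ≤ t₀ → ∀ (ρ : ℝ → X) (ρ' : X),
      HasDerivWithinAt ρ ρ' s t₀ → (∀ᶠ t in 𝓝[s] t₀, 0 ≤ t) →
      HasDerivWithinAt (fun t => T t 0 (ρ t))
        (A t₀ (T t₀ 0 (ρ t₀)) + T t₀ 0 ρ') s t₀ := by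
    intro s t₀ ht₀ ρ ρ' hρ hev
    obtain ⟨C, hC1, hC⟩ := gron (t₀ + 1) (by linarith)
    have hterm1 : HasDerivWithinAt (fun t => T t 0 (ρ t₀))
        (A t₀ (T t₀ 0 (ρ t₀))) s t₀ := (hTode 0 le_rfl (ρ t₀) t₀ ht₀).hasDerivWithinAt
    rw [hasDerivWithinAt_iff_isLittleO] at hρ hterm1 ⊢
    have hbound : ∀ᶠ t in 𝓝[s] t₀, 0 ≤ t ∧ t ≤ t₀ + 1 := by
      have hIic : ∀ᶠ t in 𝓝[s] t₀, t ≤ t₀ + 1 :=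
        eventually_nhdsWithin_of_eventually_nhds (eventually_le_nhds
          (by linarith))
      filter_upwards [hev, hIic] with t h1 h2
      exact ⟨h1, h2⟩
    have hε : Tendsto (fun t => T t 0 ρ' - T t₀ 0 ρ') (𝓝[s] t₀) (𝓝 0) := by
      have hcA : Tendsto (fun t => T t 0 ρ') (𝓝 t₀) (𝓝 (T t₀ 0 ρ')) :=
        (hTode 0 le_rfl ρ' t₀ ht₀).continuousAt.tendsto
      have := (hcA.mono_left (nhdsWithin_le_nhds (s := s))).sub
        (tendsto_const_nhds (x := T t₀ 0 ρ') (f := 𝓝[s] t₀))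
      simpa using this
    have h1 : (fun t => T t 0 (ρ t - ρ t₀ - (t - t₀) • ρ')) =o[𝓝[s] t₀]
        fun t => t - t₀ := by
      refine aux_isLittleO_of_bound (C := C) ?_ hρ
      filter_upwards [hbound] with t ht
      exact hC t ⟨ht.1, ht.2⟩ 0 ⟨le_refl 0, by linarith⟩ _
    have h2 : (fun t => (t - t₀) • (T t 0 ρ' - T t₀ 0 ρ')) =o[𝓝[s] t₀]
        fun t => t - t₀ := aux_isLittleO_smul hε
    refine ((h1.add h2).add hterm1).congr' ?_ (EventuallyEq.refl _ _)
    filter_upwards with t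
    show T t 0 (ρ t - ρ t₀ - (t - t₀) • ρ') + (t - t₀) • (T t 0 ρ' - T t₀ 0 ρ')
        + (T t 0 (ρ t₀) - T t₀ 0 (ρ t₀) - (t - t₀) • A t₀ (T t₀ 0 (ρ t₀)))
        = T t 0 (ρ t) - T t₀ 0 (ρ t₀) - (t - t₀) • (A t₀ (T t₀ 0 (ρ t₀)) + T t₀ 0 ρ')
    rw [map_sub, map_sub, _root_.map_smul, smul_sub, smul_add]
    abel
  -- ### derivative of s ↦ T 0 s (w s)
  have hTderivTheta : ∀ (w : ℝ → X) (w' : X) (s₀ : ℝ), 0 < s₀ →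
      HasDerivAt w w' s₀ →
      HasDerivAt (fun s => T 0 s (w s)) (T 0 s₀ w' - T 0 s₀ (A s₀ (w s₀))) s₀ := by
    intro w w' s₀ hs₀ hw
    obtain ⟨C, hC1, hC⟩ := gron (s₀ + 1) (by linarith)
    have hterm1 : HasDerivAt (fun s => T 0 s (w s₀)) (-(T 0 s₀ (A s₀ (w s₀)))) s₀ :=
      hTderiv2 0 le_rfl s₀ hs₀ (w s₀)
    rw [hasDerivAt_iff_isLittleO] at hw hterm1 ⊢
    have hbound : ∀ᶠ s in 𝓝 s₀, 0 ≤ s ∧ s ≤ s₀ + 1 := by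
      filter_upwards [Ioo_mem_nhds hs₀ (lt_add_one s₀)] with s hs
      exact ⟨hs.1.le, hs.2.le⟩
    have hε : Tendsto (fun s => T 0 s w' - T 0 s₀ w') (𝓝 s₀) (𝓝 0) := by
      have hcA : ContinuousAt (fun s => T 0 s w') s₀ :=
        (hTcont2 0 le_rfl (fun _ => w') continuousOn_const).continuousAt (Ici_mem_nhds hs₀)
      have := hcA.tendsto.sub (tendsto_const_nhds (x := T 0 s₀ w'))
      simpa using this
    have h1 : (fun s => T 0 s (w s - w s₀ - (s - s₀) • w')) =o[𝓝 s₀]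
        fun s => s - s₀ := by
      refine aux_isLittleO_of_bound (C := C) ?_ hw
      filter_upwards [hbound] with s hs
      exact hC 0 ⟨le_refl 0, by linarith⟩ s ⟨hs.1, hs.2⟩ _
    have h2 : (fun s => (s - s₀) • (T 0 s w' - T 0 s₀ w')) =o[𝓝 s₀]
        fun s => s - s₀ := aux_isLittleO_smul hε
    refine ((h1.add h2).add hterm1).congr' ?_ (EventuallyEq.refl _ _)
    filter_upwards with s
    show T 0 s (w s - w s₀ - (s - s₀) • w') + (s - s₀) • (T 0 s w' - T 0 s₀ w')
        + (T 0 s (w s₀) - T 0 s₀ (w s₀) - (s - s₀) • -(T 0 s₀ (A s₀ (w s₀))))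
        = T 0 s (w s) - T 0 s₀ (w s₀) - (s - s₀) • (T 0 s₀ w' - T 0 s₀ (A s₀ (w s₀)))
    rw [map_sub, map_sub, _root_.map_smul, smul_sub, smul_sub, smul_neg]
    abel
  -- ### integrals of μ-expressions
  have hF1deriv : ∀ s, 0 ≤ s → HasDerivAt (fun x => μ x ^ lam)
      (lam * μ s ^ (lam - 1) * μ' s) s := by
    intro s hs
    have h := (Real.hasDerivAt_rpow_const (x := μ s) (p := lam)
      (Or.inl (hμpos s hs).ne')).comp s (hμderiv s hs)
    simpa [Function.comp_def, mul_assoc] using h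
  have hF2deriv : ∀ s, 0 ≤ s → HasDerivAt (fun x => -(μ x ^ (-lam)))
      (lam * μ s ^ (-lam - 1) * μ' s) s := by
    intro s hs
    have h := (Real.hasDerivAt_rpow_const (x := μ s) (p := -lam)
      (Or.inl (hμpos s hs).ne')).comp s (hμderiv s hs)
    have h2 : HasDerivAt (fun x => -(μ x ^ (-lam))) (-(-lam * μ s ^ (-lam - 1) * μ' s)) s := by
      simpa [Function.comp_def, mul_assoc, Pi.neg_def] using h.neg
    convert h2 using 1
    ring
  have hψ1 : ∀ t, 0 ≤ t → IntegrableOn (fun s => lam * μ s ^ (lam - 1) * μ' s) (Ioc 0 t) ∧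
      ∫ s in Ioc 0 t, lam * μ s ^ (lam - 1) * μ' s = μ t ^ lam - 1 := by
    intro t ht
    have hcont : ContinuousOn (fun x => μ x ^ lam) (Icc 0 t) :=
      fun x hx => (hF1deriv x hx.1).continuousAt.continuousWithinAt
    have hderiv : ∀ x ∈ Ioo 0 t, HasDerivAt (fun x => μ x ^ lam)
        (lam * μ x ^ (lam - 1) * μ' x) x := fun x hx => hF1deriv x hx.1.le
    have hpos : ∀ x ∈ Ioo 0 t, 0 ≤ lam * μ x ^ (lam - 1) * μ' x := fun x hx =>
      mul_nonneg (mul_nonneg hlam.le (Real.rpow_nonneg (hμpos x hx.1.le).le _))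
        (hμ'nonneg x hx.1.le)
    have hint := intervalIntegral.integrableOn_deriv_of_nonneg hcont hderiv hpos
    refine ⟨hint, ?_⟩
    have hval := intervalIntegral.integral_eq_sub_of_hasDeriv_right_of_le ht hcont
      (fun x hx => (hderiv x hx).hasDerivWithinAt)
      ((intervalIntegrable_iff_integrableOn_Ioc_of_le ht).2 hint)
    rw [intervalIntegral.integral_of_le ht] at hval
    rw [hval, hμ0, Real.one_rpow]
  have hψ2 : ∀ t, 0 ≤ t → IntegrableOn (fun s => lam * μ s ^ (-lam - 1) * μ' s) (Ioi t) ∧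
      ∫ s in Ioi t, lam * μ s ^ (-lam - 1) * μ' s = μ t ^ (-lam) := by
    intro t ht
    have hcont : ContinuousWithinAt (fun x => -(μ x ^ (-lam))) (Ici t) t :=
      (hF2deriv t ht).continuousAt.continuousWithinAt
    have hderiv : ∀ x ∈ Ioi t, HasDerivAt (fun x => -(μ x ^ (-lam)))
        (lam * μ x ^ (-lam - 1) * μ' x) x := fun x hx => hF2deriv x (ht.trans hx.out.le)
    have hpos : ∀ x ∈ Ioi t, 0 ≤ lam * μ x ^ (-lam - 1) * μ' x := fun x hx =>
      mul_nonneg (mul_nonneg hlam.le (Real.rpow_nonneg (hμpos x (ht.trans hx.out.le)).le _))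
        (hμ'nonneg x (ht.trans hx.out.le))
    have htend : Tendsto (fun x => -(μ x ^ (-lam))) atTop (𝓝 0) := by
      have := ((tendsto_rpow_neg_atTop hlam).comp hμtop).neg
      simpa [Function.comp] using this
    refine ⟨integrableOn_Ioi_deriv_of_nonneg hcont hderiv hpos htend, ?_⟩
    have hval := integral_Ioi_of_hasDerivAt_of_nonneg hcont hderiv hpos htend
    rw [hval]
    ring
  have hμ'int : ∀ t, 0 ≤ t → IntegrableOn μ' (Ioc 0 t) := by
    intro t ht
    exact intervalIntegral.integrableOn_deriv_of_nonneg
      (hμcont.mono (fun x hx => hx.1))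
      (fun x hx => hμderiv x hx.1.le) (fun x hx => hμ'nonneg x hx.1.le)
  -- ### pointwise kernel estimates
  have hker1 : ∀ t s, 0 ≤ t → 0 < s → s ≤ t → ∀ (w : X) (K : ℝ), 0 ≤ K →
      ‖w‖ ≤ K * (μ' s / (μ s * ν s ^ d)) →
      ‖T t s (P1 s w)‖ ≤ (D * K / lam * μ t ^ (-lam)) * (lam * μ s ^ (lam - 1) * μ' s) := by
    intro t s ht hs hst w K hK hw
    have hμs := hμpos s hs.le
    have hμt := hμpos t ht
    have hνs := hνdpos s hs.le
    have hkernn : 0 ≤ D * (μ t / μ s) ^ (-lam) * ν s ^ d :=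
      mul_nonneg (mul_nonneg hD.le (Real.rpow_nonneg (div_nonneg hμt.le hμs.le) _)) hνs.le
    have h1 : ‖T t s (P1 s w)‖ ≤ (D * (μ t / μ s) ^ (-lam) * ν s ^ d) * ‖w‖ :=
      calc ‖T t s (P1 s w)‖ = ‖((T t s).comp (P1 s)) w‖ := rfl
        _ ≤ ‖(T t s).comp (P1 s)‖ * ‖w‖ := ContinuousLinearMap.le_opNorm _ _
        _ ≤ _ := mul_le_mul_of_nonneg_right (hbS t s hs.le hst) (norm_nonneg _)
    have h2 := mul_le_mul_of_nonneg_left hw hkernn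
    refine (h1.trans h2).trans (le_of_eq ?_)
    have e1 : (μ t / μ s) ^ (-lam) = (μ s ^ lam) / (μ t ^ lam) := by
      rw [Real.rpow_neg (div_nonneg hμt.le hμs.le), Real.div_rpow hμt.le hμs.le, inv_div]
    have e2 : μ s ^ (lam - 1) = μ s ^ lam / μ s := Real.rpow_sub_one hμs.ne' lam
    have e3 : μ t ^ (-lam) = (μ t ^ lam)⁻¹ := Real.rpow_neg hμt.le lam
    rw [e1, e2, e3]
    have hμtl : μ t ^ lam ≠ 0 := (Real.rpow_pos_of_pos hμt lam).ne'
    have hμsne : μ s ≠ 0 := hμs.ne'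
    have hνne : ν s ^ d ≠ 0 := hνs.ne'
    field_simp
  have hker2 : ∀ t s, 0 ≤ t → 0 < s → t ≤ s → ∀ (w : X) (K : ℝ), 0 ≤ K →
      ‖w‖ ≤ K * (μ' s / (μ s * ν s ^ d)) →
      ‖T t s (P2 s w)‖ ≤ (D * K / lam * μ t ^ lam) * (lam * μ s ^ (-lam - 1) * μ' s) := by
    intro t s ht hs hts w K hK hw
    have hμs := hμpos s hs.le
    have hμt := hμpos t ht
    have hνs := hνdpos s hs.le
    have hkernn : 0 ≤ D * (μ s / μ t) ^ (-lam) * ν s ^ d :=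
      mul_nonneg (mul_nonneg hD.le (Real.rpow_nonneg (div_nonneg hμs.le hμt.le) _)) hνs.le
    have h1 : ‖T t s (P2 s w)‖ ≤ (D * (μ s / μ t) ^ (-lam) * ν s ^ d) * ‖w‖ :=
      calc ‖T t s (P2 s w)‖ = ‖((T t s).comp (P2 s)) w‖ := rfl
        _ ≤ ‖(T t s).comp (P2 s)‖ * ‖w‖ := ContinuousLinearMap.le_opNorm _ _
        _ ≤ _ := mul_le_mul_of_nonneg_right (hbU t s ht hts) (norm_nonneg _)
    have h2 := mul_le_mul_of_nonneg_left hw hkernn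
    refine (h1.trans h2).trans (le_of_eq ?_)
    have e1 : (μ s / μ t) ^ (-lam) = (μ t ^ lam) / (μ s ^ lam) := by
      rw [Real.rpow_neg (div_nonneg hμs.le hμt.le), Real.div_rpow hμs.le hμt.le, inv_div]
    have e2 : μ s ^ (-lam - 1) = μ s ^ (-lam) / μ s := Real.rpow_sub_one hμs.ne' (-lam)
    have e3 : μ s ^ (-lam) = (μ s ^ lam)⁻¹ := Real.rpow_neg hμs.le lam
    rw [e1, e2, e3]
    have hμsl : μ s ^ lam ≠ 0 := (Real.rpow_pos_of_pos hμs lam).ne'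
    have hμsne : μ s ≠ 0 := hμs.ne'
    have hνne : ν s ^ d ≠ 0 := hνs.ne'
    field_simp
  -- ### pointwise operator identities
  have hidP1 : ∀ s, 0 ≤ s → ∀ w : X, P1 0 (T 0 s w) = T 0 s (P1 s w) := by
    intro s hs w
    have := (hinv 0 s hs le_rfl).1
    calc P1 0 (T 0 s w) = ((P1 0).comp (T 0 s)) w := rfl
      _ = ((T 0 s).comp (P1 s)) w := by rw [this]
      _ = T 0 s (P1 s w) := rfl
  have hidP2 : ∀ s, 0 ≤ s → ∀ w : X, P2 0 (T 0 s w) = T 0 s (P2 s w) := by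
    intro s hs w
    have := (hinv 0 s hs le_rfl).2
    calc P2 0 (T 0 s w) = ((P2 0).comp (T 0 s)) w := rfl
      _ = ((T 0 s).comp (P2 s)) w := by rw [this]
      _ = T 0 s (P2 s w) := rfl
  -- ### the master integral estimate
  have master : ∀ (u : ℝ → X) (K : ℝ), 0 ≤ K →
      AEStronglyMeasurable (fun s => T 0 s (u s)) (volume.restrict (Ioi 0)) →
      (∀ s, 0 ≤ s → ‖u s‖ ≤ K * (μ' s / (μ s * ν s ^ d))) →
      IntegrableOn (fun s => T 0 s (P2 s (u s))) (Ioi 0) ∧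
      (∀ t, 0 ≤ t → IntegrableOn (fun s => T 0 s (u s)) (Ioc 0 t)) ∧
      (∀ t, 0 ≤ t → ‖T t 0 ((∫ s in Ioc 0 t, T 0 s (u s)) -
          ∫ s in Ioi 0, T 0 s (P2 s (u s)))‖ ≤ 2 * D * K / lam) := by
    intro u K hK hmeas hub
    have hDK : 0 ≤ D * K / lam := div_nonneg (mul_nonneg hD.le hK) hlam.le
    -- integrability of the unstable part on (0, ∞)
    have hE1 : IntegrableOn (fun s => T 0 s (P2 s (u s))) (Ioi 0) := by
      apply Integrable.mono' (((hψ2 0 le_rfl).1).const_mul (D * K / lam * μ 0 ^ lam))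
      · refine (((P2 0).continuous.comp_aestronglyMeasurable hmeas)).congr ?_
        rw [Filter.EventuallyEq, ae_restrict_iff' measurableSet_Ioi]
        exact Eventually.of_forall (fun s hs => hidP2 s hs.out.le (u s))
      · rw [ae_restrict_iff' measurableSet_Ioi]
        refine Eventually.of_forall (fun s hs => ?_)
        exact hker2 0 s le_rfl hs.out hs.out.le (u s) K hK (hub s hs.out.le)
    -- integrability of the full integrand on (0, t]
    have hE2 : ∀ t, 0 ≤ t → IntegrableOn (fun s => T 0 s (u s)) (Ioc 0 t) := by
      intro t ht
      obtain ⟨C, hC1, hC⟩ := gron t ht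
      apply Integrable.mono' (((hμ'int t ht)).const_mul (C * K))
      · exact hmeas.mono_measure (Measure.restrict_mono Ioc_subset_Ioi_self le_rfl)
      · rw [ae_restrict_iff' measurableSet_Ioc]
        refine Eventually.of_forall (fun s hs => ?_)
        have hs0 : (0:ℝ) ≤ s := hs.1.le
        calc ‖T 0 s (u s)‖ ≤ C * ‖u s‖ := hC 0 ⟨le_rfl, ht⟩ s ⟨hs0, hs.2⟩ (u s)
          _ ≤ C * (K * (μ' s / (μ s * ν s ^ d))) :=
              mul_le_mul_of_nonneg_left (hub s hs0) (by linarith)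
          _ ≤ C * (K * μ' s) := by
              apply mul_le_mul_of_nonneg_left _ (by linarith)
              exact mul_le_mul_of_nonneg_left (hφle s hs0) hK
          _ = C * K * μ' s := by ring
    refine ⟨hE1, hE2, ?_⟩
    intro t ht
    have hμt := hμpos t ht
    have hmm : μ t ^ (-lam) * μ t ^ lam = 1 := by
      rw [← Real.rpow_add hμt]
      simp
    set a := ∫ s in Ioc 0 t, T 0 s (u s) with ha
    set b := ∫ s in Ioi 0, T 0 s (P2 s (u s)) with hb
    -- stable part
    have hP1a : T t 0 (P1 0 a) = ∫ s in Ioc 0 t, T t 0 (P1 0 (T 0 s (u s))) := by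
      have := ContinuousLinearMap.integral_comp_comm ((T t 0).comp (P1 0)) (hE2 t ht)
      calc T t 0 (P1 0 a) = ((T t 0).comp (P1 0)) a := rfl
        _ = ∫ s in Ioc 0 t, ((T t 0).comp (P1 0)) (T 0 s (u s)) := this.symm
        _ = _ := rfl
    have hbnd1 : ‖T t 0 (P1 0 a)‖ ≤ D * K / lam := by
      rw [hP1a]
      have hle := norm_integral_le_of_norm_le
        (f := fun s => T t 0 (P1 0 (T 0 s (u s))))
        (((hψ1 t ht).1).const_mul (D * K / lam * μ t ^ (-lam))) ?_
      · refine hle.trans ?_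
        rw [MeasureTheory.integral_const_mul, (hψ1 t ht).2]
        have h1 : 0 ≤ μ t ^ (-lam) := (Real.rpow_pos_of_pos hμt _).le
        calc D * K / lam * μ t ^ (-lam) * (μ t ^ lam - 1)
            = D * K / lam * (μ t ^ (-lam) * μ t ^ lam) - D * K / lam * μ t ^ (-lam) := by
              ring
          _ = D * K / lam - D * K / lam * μ t ^ (-lam) := by rw [hmm]; ring
          _ ≤ D * K / lam := by nlinarith [mul_nonneg hDK h1]
      · rw [ae_restrict_iff' measurableSet_Ioc]
        refine Eventually.of_forall (fun s hs => ?_)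
        have hs0 : 0 < s := hs.1
        have hrw : T t 0 (P1 0 (T 0 s (u s))) = T t s (P1 s (u s)) := by
          rw [hidP1 s hs0.le, hTapp t 0 s hs0.le le_rfl ht]
        show ‖T t 0 (P1 0 (T 0 s (u s)))‖ ≤ _
        rw [hrw]
        exact hker1 t s ht hs0 hs.2 (u s) K hK (hub s hs0.le)
    -- unstable part
    have hJ' : IntegrableOn (fun s => T t 0 (T 0 s (P2 s (u s)))) (Ioi 0) :=
      (T t 0).integrable_comp hE1
    have hP2a : T t 0 (P2 0 a) = ∫ s in Ioc 0 t, T t 0 (T 0 s (P2 s (u s))) := by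
      have h1 := ContinuousLinearMap.integral_comp_comm ((T t 0).comp (P2 0)) (hE2 t ht)
      calc T t 0 (P2 0 a) = ((T t 0).comp (P2 0)) a := rfl
        _ = ∫ s in Ioc 0 t, ((T t 0).comp (P2 0)) (T 0 s (u s)) := h1.symm
        _ = ∫ s in Ioc 0 t, T t 0 (T 0 s (P2 s (u s))) := by
            refine setIntegral_congr_fun measurableSet_Ioc (fun s hs => ?_)
            show T t 0 (P2 0 (T 0 s (u s))) = _
            rw [hidP2 s hs.1.le]
    have hTb : T t 0 b = ∫ s in Ioi 0, T t 0 (T 0 s (P2 s (u s))) :=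
      (ContinuousLinearMap.integral_comp_comm (T t 0) hE1).symm
    have hsplitIoi : (∫ s in Ioi 0, T t 0 (T 0 s (P2 s (u s))))
        = (∫ s in Ioc 0 t, T t 0 (T 0 s (P2 s (u s))))
          + ∫ s in Ioi t, T t 0 (T 0 s (P2 s (u s))) := by
      rw [← setIntegral_union (Ioc_disjoint_Ioi le_rfl) measurableSet_Ioi
        (hJ'.mono_set Ioc_subset_Ioi_self) (hJ'.mono_set (Ioi_subset_Ioi ht)),
        Ioc_union_Ioi_eq_Ioi ht]
    have hP2diff : T t 0 (P2 0 a) - T t 0 b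
        = -∫ s in Ioi t, T t 0 (T 0 s (P2 s (u s))) := by
      rw [hP2a, hTb, hsplitIoi]
      abel
    have hbnd2 : ‖T t 0 (P2 0 a) - T t 0 b‖ ≤ D * K / lam := by
      rw [hP2diff, norm_neg]
      have hle := norm_integral_le_of_norm_le
        (f := fun s => T t 0 (T 0 s (P2 s (u s))))
        (((hψ2 t ht).1).const_mul (D * K / lam * μ t ^ lam)) ?_
      · refine hle.trans ?_
        rw [MeasureTheory.integral_const_mul, (hψ2 t ht).2]
        refine le_of_eq ?_
        calc D * K / lam * μ t ^ lam * μ t ^ (-lam)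
            = D * K / lam * (μ t ^ (-lam) * μ t ^ lam) := by ring
          _ = D * K / lam := by rw [hmm]; ring
      · rw [ae_restrict_iff' measurableSet_Ioi]
        refine Eventually.of_forall (fun s hs => ?_)
        have hs0 : 0 < s := lt_of_le_of_lt ht hs.out
        have hrw : T t 0 (T 0 s (P2 s (u s))) = T t s (P2 s (u s)) :=
          hTapp t 0 s hs0.le le_rfl ht _
        show ‖T t 0 (T 0 s (P2 s (u s)))‖ ≤ _
        rw [hrw]
        exact hker2 t s ht hs0 hs.out.le (u s) K hK (hub s hs0.le)
    -- combine
    have hdecomp : T t 0 (a - b) = T t 0 (P1 0 a) + (T t 0 (P2 0 a) - T t 0 b) := by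
      have hsum0 : P1 0 a + P2 0 a = a := by
        have h := hsum 0 le_rfl
        calc P1 0 a + P2 0 a = (P1 0 + P2 0) a := rfl
          _ = a := by rw [h]; rfl
      calc T t 0 (a - b) = T t 0 (P1 0 a + P2 0 a - b) := by rw [hsum0]
        _ = T t 0 (P1 0 a) + (T t 0 (P2 0 a) - T t 0 b) := by
            rw [map_sub, map_add]; abel
    calc ‖T t 0 (a - b)‖ = ‖T t 0 (P1 0 a) + (T t 0 (P2 0 a) - T t 0 b)‖ := by
          rw [hdecomp]
      _ ≤ ‖T t 0 (P1 0 a)‖ + ‖T t 0 (P2 0 a) - T t 0 b‖ := norm_add_le _ _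
      _ ≤ D * K / lam + D * K / lam := add_le_add hbnd1 hbnd2
      _ = 2 * D * K / lam := by ring
  -- ### constants
  set κ : ℝ := 2 * c * D / lam with hκdef
  have hκ0 : 0 ≤ κ := div_nonneg (mul_nonneg (mul_nonneg (by norm_num) hc) hD.le) hlam.le
  have hκ1 : κ < 1 := by
    have h1 : 0 ≤ c * (2 * D + 1) := mul_nonneg hc (by linarith)
    linarith
  refine ⟨(2 * D / lam) / (1 - κ), div_pos (div_pos (by linarith) hlam) (by linarith), ?_⟩
  intro δ hδ y yd hy hyd
  -- ### continuity facts about y and f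
  have hycont : ContinuousOn y (Ici 0) :=
    fun t ht => (hy t ht).continuousAt.continuousWithinAt
  have hfcomp : ∀ z : ℝ → X, ContinuousOn z (Ici 0) →
      ContinuousOn (fun s => f s (z s)) (Ici 0) := by
    intro z hz
    have hpair : ContinuousOn (fun s => ((s, z s) : ℝ × X)) (Ici 0) :=
      continuousOn_id.prodMk hz
    exact hfc.comp hpair (fun s hs => ⟨hs, mem_univ _⟩)
  have hfycont : ContinuousOn (fun s => f s (y s)) (Ici 0) := hfcomp y hycont
  have hcontf : ContinuousOn (fun s => T 0 s (f s (y s))) (Ici 0) :=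
    hTcont2 0 le_rfl _ hfycont
  -- ### the defect g̃ and its measurability
  set g' : ℝ → X := fun s => yd s - A s (y s) - f s (y s) with hg'def
  have hgbound : ∀ s, 0 ≤ s → ‖g' s‖ ≤ δ * (μ' s / (μ s * ν s ^ d)) := by
    intro s hs
    have := hyd s hs
    rw [hg'def]
    calc ‖yd s - A s (y s) - f s (y s)‖ ≤ δ * μ' s / (μ s * ν s ^ d) := this
      _ = δ * (μ' s / (μ s * ν s ^ d)) := by ring
  set Θ : ℝ → X := fun s => T 0 (max s 0) (y (max s 0)) with hΘdef
  have hΘcont : Continuous Θ :=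
    (hTcont2 0 le_rfl y hycont).comp_continuous
      (continuous_id.max continuous_const) (fun x => mem_Ici.2 (le_max_right _ _))
  set q : ℝ → X := fun s => T 0 s (yd s) - T 0 s (A s (y s)) with hqdef
  have hΘderiv : ∀ s, 0 < s → HasDerivAt Θ (q s) s := by
    intro s hs
    have h := hTderivTheta y (yd s) s hs (hy s hs.le)
    refine h.congr_of_eventuallyEq ?_
    filter_upwards [Ioi_mem_nhds hs] with τ hτ
    rw [hΘdef]
    simp only [max_eq_left hτ.out.le]
  have hqmeas : AEStronglyMeasurable q (volume.restrict (Ioi 0)) := by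
    have hψc : ∀ n : ℕ, Continuous (fun s => ((n:ℝ) + 1) • (Θ (s + 1/((n:ℝ)+1)) - Θ s)) := by
      intro n
      exact ((hΘcont.comp (continuous_id.add continuous_const)).sub hΘcont).const_smul _
    refine aestronglyMeasurable_of_tendsto_ae atTop
      (fun n => ((hψc n).aestronglyMeasurable)) ?_
    rw [ae_restrict_iff' measurableSet_Ioi]
    refine Eventually.of_forall (fun s hs => ?_)
    have hder := hΘderiv s hs.out
    rw [hasDerivAt_iff_tendsto_slope] at hder
    have hseq : Tendsto (fun n : ℕ => s + 1/((n:ℝ)+1)) atTop (𝓝[≠] s) := by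
      rw [tendsto_nhdsWithin_iff]
      constructor
      · have : Tendsto (fun n : ℕ => 1/((n:ℝ)+1)) atTop (𝓝 0) :=
          tendsto_one_div_add_atTop_nhds_zero_nat
        simpa using (tendsto_const_nhds (x := s)).add this
      · refine Eventually.of_forall (fun n => ?_)
        have : (0:ℝ) < 1/((n:ℝ)+1) := by positivity
        simp only [mem_compl_iff, mem_singleton_iff]
        intro hcon
        nlinarith [hcon]
    have := hder.comp hseq
    refine this.congr (fun n => ?_)
    have hne : (1:ℝ)/((n:ℝ)+1) ≠ 0 := by positivity
    show slope Θ s (s + 1/((n:ℝ)+1)) = ((n:ℝ) + 1) • (Θ (s + 1/((n:ℝ)+1)) - Θ s)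
    rw [slope_def_module]
    have : s + 1/((n:ℝ)+1) - s = 1/((n:ℝ)+1) := by ring
    rw [this, one_div, inv_inv]
  have hgTmeas : AEStronglyMeasurable (fun s => T 0 s (g' s)) (volume.restrict (Ioi 0)) := by
    have h1 : AEStronglyMeasurable (fun s => T 0 s (f s (y s))) (volume.restrict (Ioi 0)) :=
      (hcontf.mono Ioi_subset_Ici_self).aestronglyMeasurable measurableSet_Ioi
    refine (hqmeas.sub h1).congr ?_
    rw [Filter.EventuallyEq, ae_restrict_iff' measurableSet_Ioi]
    refine Eventually.of_forall (fun s hs => ?_)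
    show q s - T 0 s (f s (y s)) = T 0 s (g' s)
    rw [hqdef, hg'def]
    simp only [map_sub]
  -- ### the variation of constants identity
  have hVoC : ∀ t, 0 ≤ t →
      T 0 t (y t) = y 0 + ∫ s in Ioc 0 t, q s := by
    intro t ht
    rcases eq_or_lt_of_le ht with h | h
    · rw [← h]
      simp [hTid 0 le_rfl]
    obtain ⟨C, hC1, hC⟩ := gron t ht
    obtain ⟨B, hB⟩ := (isCompact_Icc (a := (0:ℝ)) (b := t)).exists_bound_of_continuousOn
      (hcontf.mono (fun x hx => hx.1))
    have hqint : IntervalIntegrable q volume 0 t := by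
      rw [intervalIntegrable_iff_integrableOn_Ioc_of_le ht]
      apply Integrable.mono' (g := fun s => C * (δ * μ' s) + B)
        ((((hμ'int t ht)).const_mul δ).const_mul C |>.add
          (integrableOn_const measure_Ioc_lt_top.ne))
      · exact hqmeas.mono_measure (Measure.restrict_mono Ioc_subset_Ioi_self le_rfl)
      · rw [ae_restrict_iff' measurableSet_Ioc]
        refine Eventually.of_forall (fun s hs => ?_)
        have hs0 : (0:ℝ) ≤ s := hs.1.le
        have hqrw : q s = T 0 s (g' s) + T 0 s (f s (y s)) := by
          rw [hqdef, hg'def]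
          simp only [map_sub]
          abel
        rw [hqrw]
        have h1 : ‖T 0 s (g' s)‖ ≤ C * (δ * μ' s) := by
          calc ‖T 0 s (g' s)‖ ≤ C * ‖g' s‖ := hC 0 ⟨le_rfl, ht⟩ s ⟨hs0, hs.2⟩ _
            _ ≤ C * (δ * (μ' s / (μ s * ν s ^ d))) :=
                mul_le_mul_of_nonneg_left (hgbound s hs0) (by linarith)
            _ ≤ C * (δ * μ' s) := by
                refine mul_le_mul_of_nonneg_left ?_ (by linarith)
                exact mul_le_mul_of_nonneg_left (hφle s hs0) hδ.le
        have h2 : ‖T 0 s (f s (y s))‖ ≤ B := hB s ⟨hs0, hs.2⟩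
        calc ‖T 0 s (g' s) + T 0 s (f s (y s))‖
            ≤ ‖T 0 s (g' s)‖ + ‖T 0 s (f s (y s))‖ := norm_add_le _ _
          _ ≤ C * (δ * μ' s) + B := add_le_add h1 h2
    have hftc := intervalIntegral.integral_eq_sub_of_hasDeriv_right_of_le ht
      (hΘcont.continuousOn) (fun x hx => (hΘderiv x hx.1).hasDerivWithinAt) hqint
    rw [intervalIntegral.integral_of_le ht] at hftc
    have hΘt : Θ t = T 0 t (y t) := by rw [hΘdef]; simp only [max_eq_left ht]
    have hΘ0 : Θ 0 = y 0 := by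
      rw [hΘdef]
      simp only [max_self]
      rw [hTid 0 le_rfl]
      rfl
    rw [hΘt, hΘ0] at hftc
    rw [hftc]
    abel
  have hfyint : ∀ t, 0 ≤ t → IntegrableOn (fun s => T 0 s (f s (y s))) (Ioc 0 t) := by
    intro t ht
    exact ((hcontf.mono (fun x hx => hx.1)).integrableOn_Icc).mono_set Ioc_subset_Icc_self
  set W : X := ∫ s in Ioi 0, T 0 s (P2 s (g' s)) with hWdef
  have hgmaster := master g' δ hδ.le hgTmeas hgbound
  have hyform : ∀ t, 0 ≤ t → y t = T t 0 (y 0 +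
      ((∫ s in Ioc 0 t, T 0 s (g' s)) + ∫ s in Ioc 0 t, T 0 s (f s (y s)))) := by
    intro t ht
    have hsplit : (∫ s in Ioc 0 t, q s) =
        (∫ s in Ioc 0 t, T 0 s (g' s)) + ∫ s in Ioc 0 t, T 0 s (f s (y s)) := by
      rw [← integral_add (hgmaster.2.1 t ht) (hfyint t ht)]
      refine setIntegral_congr_fun measurableSet_Ioc (fun s hs => ?_)
      show q s = T 0 s (g' s) + T 0 s (f s (y s))
      rw [hqdef, hg'def]
      simp only [map_sub]
      abel
    calc y t = T t 0 (T 0 t (y t)) := (hTinv t 0 ht le_rfl (y t)).symm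
      _ = _ := by rw [hVoC t ht, hsplit]
  have hegbound : ∀ t, 0 ≤ t →
      ‖y t - T t 0 ((y 0 + W) + ∫ s in Ioc 0 t, T 0 s (f s (y s)))‖ ≤ 2 * D * δ / lam := by
    intro t ht
    have hrw : y t - T t 0 ((y 0 + W) + ∫ s in Ioc 0 t, T 0 s (f s (y s)))
        = T t 0 ((∫ s in Ioc 0 t, T 0 s (g' s)) - W) := by
      conv_lhs => rw [hyform t ht]
      rw [← map_sub]
      congr 1
      abel
    rw [hrw, hWdef]
    exact hgmaster.2.2 t ht
  -- ### continuity of primitives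
  have hprimCont : ∀ w : ℝ → X, ContinuousOn w (Ici 0) →
      ContinuousOn (fun τ => ∫ s in Ioc 0 τ, T 0 s (w s)) (Ici 0) := by
    intro w hw
    set ι : ℝ → X := fun s => T 0 (max s 0) (w (max s 0)) with hι
    have hιc : Continuous ι :=
      (hTcont2 0 le_rfl w hw).comp_continuous
        (continuous_id.max continuous_const) (fun x => mem_Ici.2 (le_max_right _ _))
    have heq : ∀ τ ∈ Ici (0:ℝ), (∫ s in (0:ℝ)..τ, ι s) = ∫ s in Ioc 0 τ, T 0 s (w s) := by
      intro τ hτ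
      rw [intervalIntegral.integral_of_le hτ.out]
      refine setIntegral_congr_fun measurableSet_Ioc (fun s hs => ?_)
      rw [hι]
      simp only [max_eq_left hs.1.le]
    have hcontprim : Continuous (fun τ => ∫ s in (0:ℝ)..τ, ι s) :=
      intervalIntegral.continuous_primitive (fun a b => hιc.intervalIntegrable a b) 0
    exact ContinuousOn.congr hcontprim.continuousOn (fun τ hτ => (heq τ hτ).symm)
  -- ### data for each candidate function e
  have hueCont : ∀ e : BoundedContinuousFunction ℝ X,
      ContinuousOn (fun s => f s (y s + e s) - f s (y s)) (Ici 0) := fun e =>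
    (hfcomp _ (hycont.add e.continuous.continuousOn)).sub hfycont
  have hueMeas : ∀ e : BoundedContinuousFunction ℝ X,
      AEStronglyMeasurable (fun s => T 0 s (f s (y s + e s) - f s (y s)))
        (volume.restrict (Ioi 0)) := fun e =>
    ((hTcont2 0 le_rfl _ (hueCont e)).mono Ioi_subset_Ici_self).aestronglyMeasurable
      measurableSet_Ioi
  have hueBound : ∀ e : BoundedContinuousFunction ℝ X, ∀ s, 0 ≤ s →
      ‖f s (y s + e s) - f s (y s)‖ ≤ (c * ‖e‖) * (μ' s / (μ s * ν s ^ d)) := by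
    intro e s hs
    have h := hfLip s hs (y s + e s) (y s)
    have hnn : 0 ≤ c * μ' s / (μ s * ν s ^ d) :=
      div_nonneg (mul_nonneg hc (hμ'nonneg s hs))
        (mul_pos (hμpos s hs) (hνdpos s hs)).le
    calc ‖f s (y s + e s) - f s (y s)‖
        ≤ c * μ' s / (μ s * ν s ^ d) * ‖e s‖ := by
          simpa [add_sub_cancel_left] using h
      _ ≤ c * μ' s / (μ s * ν s ^ d) * ‖e‖ :=
          mul_le_mul_of_nonneg_left (e.norm_coe_le_norm s) hnn
      _ = (c * ‖e‖) * (μ' s / (μ s * ν s ^ d)) := by ring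
  have hueMaster := fun e : BoundedContinuousFunction ℝ X =>
    master _ (c * ‖e‖) (mul_nonneg hc (norm_nonneg e)) (hueMeas e) (hueBound e)
  -- ### the fixed point operator
  have hΦex : ∀ e : BoundedContinuousFunction ℝ X, ∃ g : BoundedContinuousFunction ℝ X, ∀ t : ℝ,
      g t = T (max t 0) 0 ((∫ s in Ioc 0 (max t 0), T 0 s (f s (y s + e s) - f s (y s)))
            - ∫ s in Ioi 0, T 0 s (P2 s (f s (y s + e s) - f s (y s))))
          - (y (max t 0) - T (max t 0) 0 ((y 0 + W)
            + ∫ s in Ioc 0 (max t 0), T 0 s (f s (y s)))) := by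
    intro e
    set Gf : ℝ → X := fun τ =>
      T τ 0 ((∫ s in Ioc 0 τ, T 0 s (f s (y s + e s) - f s (y s)))
        - ∫ s in Ioi 0, T 0 s (P2 s (f s (y s + e s) - f s (y s))))
      - (y τ - T τ 0 ((y 0 + W) + ∫ s in Ioc 0 τ, T 0 s (f s (y s)))) with hGf
    have hGcont : ContinuousOn Gf (Ici 0) := by
      have hpart1 : ContinuousOn (fun τ =>
          T τ 0 ((∫ s in Ioc 0 τ, T 0 s (f s (y s + e s) - f s (y s)))
            - ∫ s in Ioi 0, T 0 s (P2 s (f s (y s + e s) - f s (y s))))) (Ici 0) :=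
        hTcont1 _ ((hprimCont _ (hueCont e)).sub continuousOn_const)
      have hpart2 : ContinuousOn (fun τ =>
          T τ 0 ((y 0 + W) + ∫ s in Ioc 0 τ, T 0 s (f s (y s)))) (Ici 0) :=
        hTcont1 _ (continuousOn_const.add (hprimCont _ hfycont))
      exact hpart1.sub (hycont.sub hpart2)
    refine ⟨BoundedContinuousFunction.ofNormedAddCommGroup (fun t => Gf (max t 0))
      (hGcont.comp_continuous (continuous_id.max continuous_const)
        (fun x => mem_Ici.2 (le_max_right _ _)))
      (2 * D * (c * ‖e‖) / lam + 2 * D * δ / lam) (fun t => ?_), fun t => rfl⟩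
    have hm : (0:ℝ) ≤ max t 0 := le_max_right _ _
    rw [hGf]
    refine (norm_sub_le _ _).trans (add_le_add ?_ ?_)
    · exact (hueMaster e).2.2 (max t 0) hm
    · exact hegbound (max t 0) hm
  choose Φ hΦ using hΦex
  -- ### the operator is a contraction
  have hΦdist : ∀ e₁ e₂ : BoundedContinuousFunction ℝ X, dist (Φ e₁) (Φ e₂) ≤ κ * dist e₁ e₂ := by
    intro e₁ e₂
    have hu12cont : ContinuousOn (fun s => f s (y s + e₁ s) - f s (y s + e₂ s)) (Ici 0) :=
      (hfcomp _ (hycont.add e₁.continuous.continuousOn)).sub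
        (hfcomp _ (hycont.add e₂.continuous.continuousOn))
    have hu12meas : AEStronglyMeasurable
        (fun s => T 0 s (f s (y s + e₁ s) - f s (y s + e₂ s)))
        (volume.restrict (Ioi 0)) :=
      ((hTcont2 0 le_rfl _ hu12cont).mono Ioi_subset_Ici_self).aestronglyMeasurable
        measurableSet_Ioi
    have hu12bound : ∀ s, 0 ≤ s → ‖f s (y s + e₁ s) - f s (y s + e₂ s)‖
        ≤ (c * dist e₁ e₂) * (μ' s / (μ s * ν s ^ d)) := by
      intro s hs
      have h := hfLip s hs (y s + e₁ s) (y s + e₂ s)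
      have hnn : 0 ≤ c * μ' s / (μ s * ν s ^ d) :=
        div_nonneg (mul_nonneg hc (hμ'nonneg s hs))
          (mul_pos (hμpos s hs) (hνdpos s hs)).le
      have hdist : ‖e₁ s - e₂ s‖ ≤ dist e₁ e₂ := by
        rw [← dist_eq_norm]
        exact BoundedContinuousFunction.dist_coe_le_dist s
      calc ‖f s (y s + e₁ s) - f s (y s + e₂ s)‖
          ≤ c * μ' s / (μ s * ν s ^ d) * ‖e₁ s - e₂ s‖ := by
            simpa [add_sub_add_left_eq_sub] using h
        _ ≤ c * μ' s / (μ s * ν s ^ d) * dist e₁ e₂ :=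
            mul_le_mul_of_nonneg_left hdist hnn
        _ = (c * dist e₁ e₂) * (μ' s / (μ s * ν s ^ d)) := by ring
    have hm12 := master _ (c * dist e₁ e₂) (mul_nonneg hc dist_nonneg) hu12meas hu12bound
    rw [BoundedContinuousFunction.dist_le (mul_nonneg hκ0 dist_nonneg)]
    intro t
    rw [dist_eq_norm, hΦ e₁ t, hΦ e₂ t]
    set m := max t 0 with hmdef
    have hm : (0:ℝ) ≤ m := le_max_right _ _
    have hsub1 : (∫ s in Ioc 0 m, T 0 s (f s (y s + e₁ s) - f s (y s)))
        - (∫ s in Ioc 0 m, T 0 s (f s (y s + e₂ s) - f s (y s)))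
        = ∫ s in Ioc 0 m, T 0 s (f s (y s + e₁ s) - f s (y s + e₂ s)) := by
      rw [← integral_sub ((hueMaster e₁).2.1 m hm) ((hueMaster e₂).2.1 m hm)]
      refine setIntegral_congr_fun measurableSet_Ioc (fun s hs => ?_)
      show T 0 s _ - T 0 s _ = T 0 s _
      rw [← map_sub]
      congr 1
      abel
    have hsub2 : (∫ s in Ioi 0, T 0 s (P2 s (f s (y s + e₁ s) - f s (y s))))
        - (∫ s in Ioi 0, T 0 s (P2 s (f s (y s + e₂ s) - f s (y s))))
        = ∫ s in Ioi 0, T 0 s (P2 s (f s (y s + e₁ s) - f s (y s + e₂ s))) := by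
      rw [← integral_sub ((hueMaster e₁).1) ((hueMaster e₂).1)]
      refine setIntegral_congr_fun measurableSet_Ioi (fun s hs => ?_)
      show T 0 s _ - T 0 s _ = T 0 s _
      rw [← map_sub, ← map_sub]
      congr 2
      abel
    have hcollect : T m 0 ((∫ s in Ioc 0 m, T 0 s (f s (y s + e₁ s) - f s (y s)))
            - ∫ s in Ioi 0, T 0 s (P2 s (f s (y s + e₁ s) - f s (y s))))
          - (y m - T m 0 ((y 0 + W) + ∫ s in Ioc 0 m, T 0 s (f s (y s))))
          - (T m 0 ((∫ s in Ioc 0 m, T 0 s (f s (y s + e₂ s) - f s (y s)))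
            - ∫ s in Ioi 0, T 0 s (P2 s (f s (y s + e₂ s) - f s (y s))))
          - (y m - T m 0 ((y 0 + W) + ∫ s in Ioc 0 m, T 0 s (f s (y s)))))
        = T m 0 ((∫ s in Ioc 0 m, T 0 s (f s (y s + e₁ s) - f s (y s + e₂ s)))
            - ∫ s in Ioi 0, T 0 s (P2 s (f s (y s + e₁ s) - f s (y s + e₂ s)))) := by
      rw [eq_comm, ← hsub1, ← hsub2]
      simp only [map_sub]
      abel
    rw [hcollect]
    refine (hm12.2.2 m hm).trans (le_of_eq ?_)
    rw [hκdef]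
    ring
  -- ### the fixed point
  have hcw : ContractingWith (Real.toNNReal κ) Φ := by
    constructor
    · have h : ((Real.toNNReal κ : NNReal) : ℝ) < 1 := by
        rw [Real.coe_toNNReal _ hκ0]
        exact hκ1
      exact_mod_cast h
    · apply LipschitzWith.of_dist_le_mul
      intro e₁ e₂
      rw [Real.coe_toNNReal _ hκ0]
      exact hΦdist e₁ e₂
  set estar : BoundedContinuousFunction ℝ X := ContractingWith.fixedPoint Φ hcw with hestardef
  have hfix : Φ estar = estar := hcw.fixedPoint_isFixedPt
  have hΦ0 : ‖Φ 0‖ ≤ 2 * D * δ / lam := by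
    have hnn : 0 ≤ 2 * D * δ / lam :=
      div_nonneg (mul_nonneg (by linarith) hδ.le) hlam.le
    rw [BoundedContinuousFunction.norm_le hnn]
    intro t
    rw [hΦ 0 t]
    have hzero : ∀ s : ℝ, f s (y s + (0 : BoundedContinuousFunction ℝ X) s) - f s (y s) = (0:X) := by
      intro s
      simp
    simp only [hzero, map_zero, integral_zero, sub_zero, zero_sub, norm_neg]
    exact hegbound (max t 0) (le_max_right _ _)
  have hest : ‖estar‖ ≤ 2 * D * δ / lam / (1 - κ) := by
    have h1 := hcw.dist_fixedPoint_le 0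
    rw [Real.coe_toNNReal _ hκ0] at h1
    rw [dist_zero_left, dist_zero_left] at h1
    calc ‖estar‖ ≤ ‖Φ 0‖ / (1 - κ) := by
          rw [hestardef]
          exact h1
      _ ≤ 2 * D * δ / lam / (1 - κ) :=
          (div_le_div_iff_of_pos_right (by linarith)).2 hΦ0
  -- ### the shadowing trajectory
  set x : ℝ → X := fun s => y s + estar s with hxdef
  have hxcont : ContinuousOn x (Ici 0) := hycont.add estar.continuous.continuousOn
  set IB : X := ∫ s in Ioi 0, T 0 s (P2 s (f s (y s + estar s) - f s (y s))) with hIBdef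
  set v0 : X := (y 0 + W) - IB with hv0def
  have hmild : ∀ t, 0 ≤ t → x t = T t 0 (v0 + ∫ s in Ioc 0 t, T 0 s (f s (x s))) := by
    intro t ht
    have hfixt : Φ estar t = estar t := by rw [hfix]
    rw [hΦ estar t, max_eq_left ht] at hfixt
    have hadd : (∫ s in Ioc 0 t, T 0 s (f s (y s + estar s) - f s (y s)))
        + (∫ s in Ioc 0 t, T 0 s (f s (y s))) = ∫ s in Ioc 0 t, T 0 s (f s (x s)) := by
      rw [← integral_add ((hueMaster estar).2.1 t ht) (hfyint t ht)]
      refine setIntegral_congr_fun measurableSet_Ioc (fun s hs => ?_)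
      show T 0 s _ + T 0 s _ = T 0 s (f s (x s))
      rw [← map_add]
      congr 1
      simp only [hxdef]
      abel
    set IA : X := ∫ s in Ioc 0 t, T 0 s (f s (y s + estar s) - f s (y s)) with hIAdef
    set Cv : X := (y 0 + W) + ∫ s in Ioc 0 t, T 0 s (f s (y s)) with hCvdef
    have hstep : x t = T t 0 ((IA - IB) + Cv) := by
      show y t + estar t = _
      rw [map_add (T t 0) (IA - IB) Cv, ← hfixt]
      abel
    rw [hstep, ← hadd]
    congr 1
    rw [hv0def, hCvdef]
    abel
  set ι : ℝ → X := fun s => T 0 (max s 0) (f (max s 0) (x (max s 0))) with hιdef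
  have hιc : Continuous ι :=
    (hTcont2 0 le_rfl _ (hfcomp x hxcont)).comp_continuous
      (continuous_id.max continuous_const) (fun s => mem_Ici.2 (le_max_right _ _))
  set ρ : ℝ → X := fun τ => v0 + ∫ s in (0:ℝ)..τ, ι s with hρdef
  have hρderiv : ∀ τ : ℝ, HasDerivAt ρ (ι τ) τ := by
    intro τ
    have h := intervalIntegral.integral_hasDerivAt_right
      (hιc.intervalIntegrable 0 τ)
      (hιc.stronglyMeasurable.stronglyMeasurableAtFilter)
      hιc.continuousAt
    exact h.const_add v0
  have hxT : ∀ τ, 0 ≤ τ → x τ = T τ 0 (ρ τ) := by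
    intro τ hτ
    rw [hmild τ hτ, hρdef]
    congr 2
    rw [intervalIntegral.integral_of_le hτ]
    refine setIntegral_congr_fun measurableSet_Ioc (fun s hs => ?_)
    rw [hιdef]
    show T 0 s (f s (x s)) = T 0 (max s 0) (f (max s 0) (x (max s 0)))
    rw [max_eq_left hs.1.le]
  have hval : ∀ τ, 0 ≤ τ → A τ (T τ 0 (ρ τ)) + T τ 0 (ι τ) = A τ (x τ) + f τ (x τ) := by
    intro τ hτ
    rw [← hxT τ hτ]
    congr 1
    rw [hιdef]
    show T τ 0 (T 0 (max τ 0) (f (max τ 0) (x (max τ 0)))) = _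
    rw [max_eq_left hτ]
    exact hTinv τ 0 hτ le_rfl _
  have hderivIci : ∀ t, 0 ≤ t → HasDerivWithinAt x (A t (x t) + f t (x t)) (Ici 0) t := by
    intro t ht
    have hev : ∀ᶠ τ in 𝓝[Ici 0] t, (0:ℝ) ≤ τ := by
      filter_upwards [self_mem_nhdsWithin] with τ hτ using hτ.out
    have hF := hTderiv1 (Ici 0) t ht ρ (ι t) (hρderiv t).hasDerivWithinAt hev
    rw [hval t ht] at hF
    exact hF.congr (fun τ hτ => hxT τ hτ.out) (hxT t ht)
  have hderivAt : ∀ t, 0 < t → HasDerivAt x (A t (x t) + f t (x t)) t := by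
    intro t ht
    have hev : ∀ᶠ τ in 𝓝[univ] t, (0:ℝ) ≤ τ := by
      rw [nhdsWithin_univ]
      filter_upwards [Ioi_mem_nhds ht] with τ hτ using hτ.out.le
    have hF := hTderiv1 univ t ht.le ρ (ι t) (hρderiv t).hasDerivWithinAt hev
    rw [hasDerivWithinAt_univ] at hF
    rw [hval t ht.le] at hF
    refine hF.congr_of_eventuallyEq ?_
    filter_upwards [Ioi_mem_nhds ht] with τ hτ
    exact hxT τ hτ.out.le
  refine ⟨fun t => if t < 0 then x 0 + t • (A 0 (x 0) + f 0 (x 0)) else x t, ?_, ?_⟩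
  · intro t ht
    rcases eq_or_lt_of_le ht with h | h
    · subst h
      have hIci2 : HasDerivWithinAt
          (fun τ => if τ < 0 then x 0 + τ • (A 0 (x 0) + f 0 (x 0)) else x τ)
          (A 0 (x 0) + f 0 (x 0)) (Ici 0) 0 := by
        refine (hderivIci 0 le_rfl).congr (fun τ hτ => ?_) ?_
        · rw [if_neg (not_lt.2 hτ.out)]
        · rw [if_neg (lt_irrefl (0:ℝ))]
      have hIic2 : HasDerivWithinAt
          (fun τ => if τ < 0 then x 0 + τ • (A 0 (x 0) + f 0 (x 0)) else x τ)
          (A 0 (x 0) + f 0 (x 0)) (Iic 0) 0 := by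
        have haff : HasDerivAt (fun τ : ℝ => x 0 + τ • (A 0 (x 0) + f 0 (x 0)))
            (A 0 (x 0) + f 0 (x 0)) 0 := by
          simpa using ((hasDerivAt_id (0:ℝ)).smul_const (A 0 (x 0) + f 0 (x 0))).const_add (x 0)
        refine haff.hasDerivWithinAt.congr (fun τ hτ => ?_) ?_
        · rcases lt_or_eq_of_le hτ.out with h' | h'
          · rw [if_pos h']
          · subst h'
            rw [if_neg (lt_irrefl (0:ℝ))]
            simp
        · rw [if_neg (lt_irrefl (0:ℝ))]
          simp
      have hUnion := hIic2.union hIci2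
      rw [Iic_union_Ici, hasDerivWithinAt_univ] at hUnion
      simpa [if_neg (lt_irrefl (0:ℝ))] using hUnion
    · have hx' := hderivAt t h
      have heq : (fun τ => if τ < 0 then x 0 + τ • (A 0 (x 0) + f 0 (x 0)) else x τ)
          =ᶠ[𝓝 t] x := by
        filter_upwards [Ioi_mem_nhds h] with τ hτ
        rw [if_neg (not_lt.2 hτ.out.le)]
      have hfin := hx'.congr_of_eventuallyEq heq
      simpa [if_neg (not_lt.2 ht)] using hfin
  · intro t ht
    have h1 : (if t < 0 then x 0 + t • (A 0 (x 0) + f 0 (x 0)) else x t) - y t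
        = estar t := by
      rw [if_neg (not_lt.2 ht)]
      show y t + estar t - y t = estar t
      abel
    rw [h1]
    calc ‖estar t‖ ≤ ‖estar‖ := estar.norm_coe_le_norm t
      _ ≤ 2 * D * δ / lam / (1 - κ) := hest
      _ = (2 * D / lam) / (1 - κ) * δ := by ring
end
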